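/- Let X be countably infinite, let A ⊆ X be infinite, and let 𝒜 be a clone on X containing the ideal clone C_I for some ideal I in our sense. Set J := { B ⊆ X : B ⊆ f[A^n] for some n-ary f ∈ 𝒜 }. Then either X ∈ J, or: J is an ideal in our sense, A ∈ J, and 𝒜 ⊆ C_J. -/

import Mathlib

/-- The set of all finitary operations on `X`: an element of arity index `n`
is an `(n+1)`-ary operation, so that all arities are `≥ 1`. -/
abbrev Ops (X : Type) : Type := Σ n : ℕ, (Fin (n + 1) → X) → X

/-- `opImage f A` is the image `f[A^n]` of the `n`-th power of `A` under the
`n`-ary operation `f`. -/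
def opImage {X : Type} (f : Ops X) (A : Set X) : Set X :=
  f.2 '' {x | ∀ i, x i ∈ A}

/-- An ideal "in our sense": closed under subsets and finite unions, contains all
finite sets, contains at least one infinite set, and does not contain `X`. -/
def IsIdealInOurSense {X : Type} (I : Set (Set X)) : Prop :=
  (∀ A ∈ I, ∀ B ⊆ A, B ∈ I) ∧
  (∀ A ∈ I, ∀ B ∈ I, A ∪ B ∈ I) ∧
  (∀ A : Set X, A.Finite → A ∈ I) ∧
  (∃ A ∈ I, A.Infinite) ∧
  (Set.univ : Set X) ∉ I

/-- The clone `C_I` induced by a collection of sets `I`: all operations mapping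
powers of `I`-sets into `I`. -/
def idealClone {X : Type} (I : Set (Set X)) : Set (Ops X) :=
  {f | ∀ A ∈ I, opImage f A ∈ I}

/-- The unary part `C_I^{(1)}` of the clone induced by `I`. -/
def unaryPart {X : Type} (I : Set (Set X)) : Set (X → X) :=
  {f | ∀ A ∈ I, f '' A ∈ I}

/-- A clone: a set of finitary operations containing all projections and closed
under composition. -/
def IsClone {X : Type} (C : Set (Ops X)) : Prop :=
  (∀ (n : ℕ) (i : Fin (n + 1)), (⟨n, fun x => x i⟩ : Ops X) ∈ C) ∧
  ∀ (n m : ℕ) (f : (Fin (n + 1) → X) → X) (g : Fin (n + 1) → (Fin (m + 1) → X) → X),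
    (⟨n, f⟩ : Ops X) ∈ C → (∀ i, (⟨m, g i⟩ : Ops X) ∈ C) →
    (⟨m, fun x => f fun i => g i x⟩ : Ops X) ∈ C

/-- The clone generated by a set of operations. -/
def cloneGen {X : Type} (F : Set (Ops X)) : Set (Ops X) :=
  ⋂₀ {C : Set (Ops X) | IsClone C ∧ F ⊆ C}

/-- A precomplete clone: a proper clone whose only proper cover is the full clone `O`. -/
def IsPrecompleteClone {X : Type} (C : Set (Ops X)) : Prop :=
  IsClone C ∧ C ≠ Set.univ ∧
  ∀ D : Set (Ops X), IsClone D → C ⊂ D → D = Set.univ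

/-- The regularization `Î` of `I`: all sets `A` such that every infinite subset
of `A` contains an infinite member of `I`. -/
def regularization {X : Type} (I : Set (Set X)) : Set (Set X) :=
  {A | ∀ B ⊆ A, B.Infinite → ∃ C ⊆ B, C.Infinite ∧ C ∈ I}

/-- For an infinite `A` and a clone `𝒜` containing some ideal clone, the family
`J = { B : B ⊆ f[A^n] for some f ∈ 𝒜 }` either contains `X`, or is an ideal in
our sense containing `A` with `𝒜 ⊆ C_J`. -/
lemma memExt {X : Type} {𝒜 : Set (Ops X)} (h𝒜 : IsClone 𝒜) {n k : ℕ} (h : n + 1 ≤ k + 1)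
    {f : (Fin (n+1) → X) → X} (hf : (⟨n, f⟩ : Ops X) ∈ 𝒜) :
    (⟨k, fun x => f (fun i => x (Fin.castLE h i))⟩ : Ops X) ∈ 𝒜 :=
  h𝒜.2 n k f (fun i x => x (Fin.castLE h i)) hf (fun i => h𝒜.1 k _)

lemma opImageExt {X : Type} {n k : ℕ} (h : n+1 ≤ k+1) (f : (Fin (n+1) → X) → X)
    {A : Set X} (hA : A.Nonempty) :
    opImage (⟨n, f⟩ : Ops X) A ⊆
      opImage (⟨k, fun x => f (fun i => x (Fin.castLE h i))⟩ : Ops X) A := by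
  obtain ⟨a, ha⟩ := hA
  rintro u ⟨x, hx, rfl⟩
  refine ⟨fun j => if hj : (j : ℕ) < n + 1 then x ⟨j, hj⟩ else a, fun j => ?_, ?_⟩
  · dsimp only; split
    · exact hx _
    · exact ha
  · show f _ = f x
    congr 1
    funext i
    show (if hj : ((Fin.castLE h i : Fin (k+1)) : ℕ) < n + 1 then x ⟨_, hj⟩ else a) = x i
    rw [dif_pos (by simpa using i.isLt)]
    congr 1

open Classical in
lemma unionMem {X : Type} {𝒜 : Set (Ops X)} (h𝒜 : IsClone 𝒜)
    {A : Set X} {a b : X} (ha : a ∈ A) (hb : b ∈ A) (hab : b ≠ a)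
    (hd : (⟨2, fun v : Fin 3 → X => if v 2 = a then v 0 else v 1⟩ : Ops X) ∈ 𝒜)
    {B₁ B₂ : Set X} (h₁ : ∃ f ∈ 𝒜, B₁ ⊆ opImage f A) (h₂ : ∃ f ∈ 𝒜, B₂ ⊆ opImage f A) :
    ∃ f ∈ 𝒜, B₁ ∪ B₂ ⊆ opImage f A := by
  obtain ⟨⟨n, f⟩, hf, hB₁⟩ := h₁
  obtain ⟨⟨m, g⟩, hg, hB₂⟩ := h₂
  set k := max n m with hk
  have hn : n + 1 ≤ k + 1 := by omega
  have hm : m + 1 ≤ k + 1 := by omega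
  set f' : (Fin (k+1) → X) → X := fun x => f (fun i => x (Fin.castLE hn i)) with hf'def
  set g' : (Fin (k+1) → X) → X := fun x => g (fun i => x (Fin.castLE hm i)) with hg'def
  have hf' : (⟨k, f'⟩ : Ops X) ∈ 𝒜 := memExt h𝒜 hn hf
  have hg' : (⟨k, g'⟩ : Ops X) ∈ 𝒜 := memExt h𝒜 hm hg
  have hB₁' : B₁ ⊆ opImage ⟨k, f'⟩ A := hB₁.trans (opImageExt hn f ⟨a, ha⟩)
  have hB₂' : B₂ ⊆ opImage ⟨k, g'⟩ A := hB₂.trans (opImageExt hm g ⟨a, ha⟩)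
  set h2 : (Fin (k+2) → X) → X :=
    fun x => if x (Fin.last (k+1)) = a then f' (fun i => x i.castSucc)
             else g' (fun i => x i.castSucc) with h2def
  have hmem : (⟨k+1, h2⟩ : Ops X) ∈ 𝒜 := by
    have key := h𝒜.2 2 (k+1) (fun v : Fin 3 → X => if v 2 = a then v 0 else v 1)
      ![fun x => f' (fun i => x i.castSucc), fun x => g' (fun i => x i.castSucc),
        fun x => x (Fin.last (k+1))] hd ?_
    · convert key using 2
      rfl
    · intro i
      fin_cases i
      · simpa using h𝒜.2 k (k+1) f' (fun i x => x i.castSucc) hf' (fun i => h𝒜.1 (k+1) _)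
      · simpa using h𝒜.2 k (k+1) g' (fun i x => x i.castSucc) hg' (fun i => h𝒜.1 (k+1) _)
      · simpa using h𝒜.1 (k+1) (Fin.last (k+1))
  refine ⟨⟨k+1, h2⟩, hmem, ?_⟩
  rintro u (hu | hu)
  · obtain ⟨x, hx, rfl⟩ := hB₁' hu
    refine ⟨Fin.snoc x a, fun j => ?_, ?_⟩
    · cases j using Fin.lastCases with
      | last => simpa using ha
      | cast i => simpa using hx i
    · show h2 _ = f' x
      simp [h2def, Fin.snoc_last, Fin.snoc_castSucc]
  · obtain ⟨x, hx, rfl⟩ := hB₂' hu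
    refine ⟨Fin.snoc x b, fun j => ?_, ?_⟩
    · cases j using Fin.lastCases with
      | last => simpa using hb
      | cast i => simpa using hx i
    · show h2 _ = g' x
      simp [h2def, Fin.snoc_last, Fin.snoc_castSucc, hab]

lemma compMem {X : Type} {𝒜 : Set (Ops X)} (h𝒜 : IsClone 𝒜) {A B : Set X}
    {m n : ℕ} {g2 : (Fin (m+1) → X) → X} (hg : (⟨m, g2⟩ : Ops X) ∈ 𝒜)
    {f2 : (Fin (n+1) → X) → X} (hf : (⟨n, f2⟩ : Ops X) ∈ 𝒜)
    (hB : B ⊆ opImage ⟨n, f2⟩ A) :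
    ∃ h ∈ 𝒜, opImage (⟨m, g2⟩ : Ops X) B ⊆ opImage h A := by
  have pf : (m+1)*(n+1) = m*n+m+n+1 := by ring
  set idx : Fin (m+1) → Fin (n+1) → Fin (m*n+m+n+1) :=
    fun i j => Fin.cast pf (finProdFinEquiv (i, j)) with hidx
  refine ⟨⟨m*n+m+n, fun x => g2 (fun i => f2 (fun j => x (idx i j)))⟩, ?_, ?_⟩
  · exact h𝒜.2 m (m*n+m+n) g2 (fun i x => f2 (fun j => x (idx i j))) hg
      (fun i => h𝒜.2 n (m*n+m+n) f2 (fun j x => x (idx i j)) hf (fun j => h𝒜.1 _ _))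
  · rintro u ⟨y, hy, rfl⟩
    have hch : ∀ i, ∃ x : Fin (n+1) → X, (∀ j, x j ∈ A) ∧ f2 x = y i := by
      intro i; obtain ⟨x, hx, hfx⟩ := hB (hy i); exact ⟨x, hx, hfx⟩
    choose x hx1 hx2 using hch
    refine ⟨fun k => x (finProdFinEquiv.symm (Fin.cast pf.symm k)).1
      ((finProdFinEquiv.symm (Fin.cast pf.symm k)).2), fun k => hx1 _ _, ?_⟩
    show g2 _ = g2 y
    congr 1; funext i
    rw [← hx2 i]
    congr 1; funext j
    show x (finProdFinEquiv.symm (Fin.cast pf.symm (idx i j))).1 _ = x i j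
    have h1 : Fin.cast pf.symm (idx i j) = finProdFinEquiv (i, j) := rfl
    rw [h1, Equiv.symm_apply_apply]

theorem stmt9 {X : Type} [Countable X] [Infinite X]
    {A : Set X} (hA : A.Infinite)
    {𝒜 : Set (Ops X)} (h𝒜 : IsClone 𝒜)
    {I : Set (Set X)} (hI : IsIdealInOurSense I) (hsub : idealClone I ⊆ 𝒜) :
    (Set.univ : Set X) ∈ {B : Set X | ∃ f ∈ 𝒜, B ⊆ opImage f A} ∨
    (IsIdealInOurSense {B : Set X | ∃ f ∈ 𝒜, B ⊆ opImage f A} ∧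
      A ∈ {B : Set X | ∃ f ∈ 𝒜, B ⊆ opImage f A} ∧
      𝒜 ⊆ idealClone {B : Set X | ∃ f ∈ 𝒜, B ⊆ opImage f A}) := by
  classical
  set J := {B : Set X | ∃ f ∈ 𝒜, B ⊆ opImage f A} with hJ
  obtain ⟨a, ha⟩ := hA.nonempty
  obtain ⟨b, hb, hba⟩ : ∃ b ∈ A, b ≠ a := by
    obtain ⟨b, hb⟩ := (hA.diff (Set.finite_singleton a)).nonempty
    exact ⟨b, hb.1, fun h => hb.2 (by simp [h])⟩
  have hd : (⟨2, fun v : Fin 3 → X => if v 2 = a then v 0 else v 1⟩ : Ops X) ∈ 𝒜 := by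
    apply hsub
    intro B hB
    refine hI.1 B hB _ ?_
    rintro u ⟨v, hv, rfl⟩
    dsimp only
    split
    · exact hv 0
    · exact hv 1
  have hAJ : A ∈ J := by
    refine ⟨⟨0, fun x => x 0⟩, h𝒜.1 0 0, fun u hu => ?_⟩
    exact ⟨fun _ => u, fun _ => hu, rfl⟩
  have hsingle : ∀ x : X, {x} ∈ J := by
    intro x
    refine ⟨⟨0, fun _ => x⟩, hsub ?_, ?_⟩
    · intro B hB
      refine hI.1 {x} (hI.2.2.1 _ (Set.finite_singleton x)) _ ?_
      rintro u ⟨v, hv, rfl⟩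
      rfl
    · intro u hu
      rw [Set.mem_singleton_iff] at hu
      subst hu
      exact ⟨fun _ => a, fun _ => ha, rfl⟩
  have hsubJ : ∀ B ∈ J, ∀ C ⊆ B, C ∈ J := by
    rintro B ⟨f, hf, hBf⟩ C hCB
    exact ⟨f, hf, hCB.trans hBf⟩
  have hunion : ∀ B₁ ∈ J, ∀ B₂ ∈ J, B₁ ∪ B₂ ∈ J := fun B₁ h₁ B₂ h₂ =>
    unionMem h𝒜 ha hb hba hd h₁ h₂
  have hfinJ : ∀ B : Set X, B.Finite → B ∈ J := by
    intro B hB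
    refine Set.Finite.induction_on (motive := fun s _ => s ∈ J) B hB ?_ ?_
    · exact hsubJ A hAJ ∅ (Set.empty_subset A)
    · intro c s _ _ ih
      rw [Set.insert_eq]
      exact hunion _ (hsingle _) _ ih
  by_cases huniv : (Set.univ : Set X) ∈ J
  · left; exact huniv
  · right
    refine ⟨⟨hsubJ, hunion, hfinJ, ⟨A, hAJ, hA⟩, huniv⟩, hAJ, ?_⟩
    rintro ⟨m, g2⟩ hg B ⟨⟨n, f2⟩, hf, hBf⟩
    exact compMem h𝒜 hg hf hBf
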